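/- (Conditional score-projection identity, Theorem A.1 with Gaussian kernel.) Let p be a probability density on ℝⁿ, α ∈ ℝ, σ > 0, with Gaussian transition kernel q(x|x₀) and smoothed marginal p_t(x) = ∫ p(x₀) q(x|x₀) dx₀; p_t is everywhere positive and differentiable, with marginal score s_{p_t}(x) = ∇ log p_t(x) and conditional score ∇ₓ log q(x|x₀) = −(x − α·x₀)/σ². Let u : ℝⁿ → ℝⁿ be measurable and assume the joint integrability conditions ∫∫ p(x₀) q(x|x₀) ‖u(x)‖·(‖s_{p_t}(x)‖ + ‖x − α·x₀‖/σ²) dx dx₀ < ∞. Then ∫∫ p(x₀) q(x|x₀) ⟨u(x), s_{p_t}(x) − ∇ₓ log q(x|x₀)⟩ dx dx₀ = 0. -/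

import Mathlib

open MeasureTheory Real
open scoped RealInnerProductSpace

/-- The Gaussian transition kernel
`q(x|x₀) = (2πσ²)^(−n/2) · exp(−‖x − α·x₀‖²/(2σ²))` on `ℝⁿ`. -/
noncomputable def gaussKernel (n : ℕ) (α σ : ℝ)
    (x x₀ : EuclideanSpace ℝ (Fin n)) : ℝ :=
  (2 * π * σ ^ 2) ^ (-(n : ℝ) / 2) * Real.exp (-‖x - α • x₀‖ ^ 2 / (2 * σ ^ 2))

/-- The smoothed marginal `p_t(x) = ∫ p(x₀) q(x|x₀) dx₀`. -/
noncomputable def smoothedMarginal (n : ℕ) (p : EuclideanSpace ℝ (Fin n) → ℝ)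
    (α σ : ℝ) (x : EuclideanSpace ℝ (Fin n)) : ℝ :=
  ∫ x₀, p x₀ * gaussKernel n α σ x x₀

/-- The marginal score `s_{p_t}(x) = ∇ log p_t(x)`. -/
noncomputable def marginalScore (n : ℕ) (p : EuclideanSpace ℝ (Fin n) → ℝ)
    (α σ : ℝ) (x : EuclideanSpace ℝ (Fin n)) : EuclideanSpace ℝ (Fin n) :=
  gradient (fun y => Real.log (smoothedMarginal n p α σ y)) x

section Aux

variable {n : ℕ} {α σ : ℝ}

local notation "E" => EuclideanSpace ℝ (Fin n)

lemma gauss_pos (hσ : 0 < σ) (x x₀ : E) : 0 < gaussKernel n α σ x x₀ := by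
  unfold gaussKernel
  positivity

lemma gauss_le (hσ : 0 < σ) (x x₀ : E) :
    gaussKernel n α σ x x₀ ≤ (2 * π * σ ^ 2) ^ (-(n : ℝ) / 2) := by
  unfold gaussKernel
  have h1 : Real.exp (-‖x - α • x₀‖ ^ 2 / (2 * σ ^ 2)) ≤ 1 := by
    rw [Real.exp_le_one_iff]
    apply div_nonpos_of_nonpos_of_nonneg
    · exact neg_nonpos.mpr (by positivity)
    · positivity
  exact mul_le_of_le_one_right (by positivity) h1

lemma gauss_mul_norm_le (hσ : 0 < σ) (x x₀ : E) :
    gaussKernel n α σ x x₀ * ‖x - α • x₀‖ ≤ (2 * π * σ ^ 2) ^ (-(n : ℝ) / 2) * σ := by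
  set t := ‖x - α • x₀‖ with ht
  have ht0 : 0 ≤ t := norm_nonneg _
  have key : Real.exp (-t ^ 2 / (2 * σ ^ 2)) * t ≤ σ := by
    have h1 : t ≤ σ * Real.exp (t ^ 2 / (2 * σ ^ 2)) := by
      have h2 : t ^ 2 / (2 * σ ^ 2) + 1 ≤ Real.exp (t ^ 2 / (2 * σ ^ 2)) :=
        Real.add_one_le_exp _
      have h5 : σ * (t ^ 2 / (2 * σ ^ 2) + 1) ≤ σ * Real.exp (t ^ 2 / (2 * σ ^ 2)) :=
        mul_le_mul_of_nonneg_left h2 hσ.le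
      have e1 : σ * (t ^ 2 / (2 * σ ^ 2)) = t ^ 2 / (2 * σ) := by
        field_simp
      have h6 : t ≤ σ * (t ^ 2 / (2 * σ ^ 2) + 1) := by
        rw [mul_add, mul_one, e1, div_add' _ _ _ (ne_of_gt (by positivity : (0:ℝ) < 2 * σ)),
          le_div_iff₀ (by positivity : (0:ℝ) < 2 * σ)]
        nlinarith [sq_nonneg (t - σ)]
      linarith
    have h3 : Real.exp (-t ^ 2 / (2 * σ ^ 2)) = (Real.exp (t ^ 2 / (2 * σ ^ 2)))⁻¹ := by
      rw [← Real.exp_neg]; ring_nf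
    rw [h3, inv_mul_le_iff₀ (Real.exp_pos _)]
    calc t ≤ σ * Real.exp (t ^ 2 / (2 * σ ^ 2)) := h1
    _ = Real.exp (t ^ 2 / (2 * σ ^ 2)) * σ := mul_comm _ _
  unfold gaussKernel
  rw [mul_assoc]
  exact mul_le_mul_of_nonneg_left key (by positivity)

lemma gauss_continuous : Continuous (fun z : E × E => gaussKernel n α σ z.1 z.2) := by
  have h : Continuous fun z : E × E => z.1 - α • z.2 :=
    continuous_fst.sub (continuous_snd.const_smul α)
  unfold gaussKernel
  exact continuous_const.mul
    (Real.continuous_exp.comp (((h.norm.pow 2).neg).div_const _))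

lemma gauss_continuous_right (x : E) : Continuous (fun x₀ : E => gaussKernel n α σ x x₀) := by
  have h : Continuous fun x₀ : E => x - α • x₀ :=
    continuous_const.sub (continuous_id.const_smul α)
  unfold gaussKernel
  exact continuous_const.mul
    (Real.continuous_exp.comp (((h.norm.pow 2).neg).div_const _))

lemma gauss_hasFDerivAt (hσ : 0 < σ) (x x₀ : E) :
    HasFDerivAt (fun y => gaussKernel n α σ y x₀)
      ((-(σ ^ 2)⁻¹ * gaussKernel n α σ x x₀) • innerSL ℝ (x - α • x₀)) x := by
  have h1 : HasFDerivAt (fun y : E => ‖y - α • x₀‖ ^ 2)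
      (2 • (innerSL ℝ (x - α • x₀))) x := by
    have := ((hasFDerivAt_id x).sub_const (α • x₀)).norm_sq
    simpa using this
  have h2 : HasFDerivAt (fun y : E => -‖y - α • x₀‖ ^ 2 / (2 * σ ^ 2))
      ((-(2 * σ ^ 2)⁻¹) • (2 • (innerSL ℝ (x - α • x₀)))) x := by
    have := h1.const_mul (-(2 * σ ^ 2)⁻¹)
    refine this.congr_of_eventuallyEq (Filter.Eventually.of_forall fun y => ?_)
    ring
  have h3 := (h2.exp).const_mul ((2 * π * σ ^ 2) ^ (-(n : ℝ) / 2))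
  refine h3.congr_fderiv ?_
  ext v
  simp [gaussKernel, smul_smul]
  ring

variable {p : EuclideanSpace ℝ (Fin n) → ℝ}

lemma p_integrable (hp_int : ∫ x₀, p x₀ = 1) : Integrable p := by
  by_contra h
  rw [integral_undef h] at hp_int
  exact one_ne_zero hp_int.symm

lemma pq_integrable (hσ : 0 < σ) (hp_meas : Measurable p) (hp_nonneg : ∀ x₀, 0 ≤ p x₀)
    (hp : Integrable p) (x : E) :
    Integrable (fun x₀ : E => p x₀ * gaussKernel n α σ x x₀) := by
  apply (hp.const_mul ((2 * π * σ ^ 2) ^ (-(n : ℝ) / 2))).mono'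
  · exact (hp_meas.mul (gauss_continuous_right x).measurable).aestronglyMeasurable
  · filter_upwards with x₀
    rw [Real.norm_eq_abs, abs_of_nonneg (mul_nonneg (hp_nonneg x₀) (gauss_pos hσ x x₀).le),
      mul_comm ((2 * π * σ ^ 2) ^ (-(n : ℝ) / 2))]
    exact mul_le_mul_of_nonneg_left (gauss_le hσ x x₀) (hp_nonneg x₀)

lemma pq_vec_integrable (hσ : 0 < σ) (hp_meas : Measurable p) (hp_nonneg : ∀ x₀, 0 ≤ p x₀)
    (hp : Integrable p) (x : E) :
    Integrable (fun x₀ : E => (p x₀ * gaussKernel n α σ x x₀) • (x - α • x₀)) := by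
  apply (hp.const_mul ((2 * π * σ ^ 2) ^ (-(n : ℝ) / 2) * σ)).mono'
  · apply AEStronglyMeasurable.fun_smul
    · exact (hp_meas.mul (gauss_continuous_right x).measurable).aestronglyMeasurable
    · exact (continuous_const.sub (continuous_id.const_smul α)).aestronglyMeasurable
  · filter_upwards with x₀
    rw [norm_smul, Real.norm_eq_abs,
      abs_of_nonneg (mul_nonneg (hp_nonneg x₀) (gauss_pos hσ x x₀).le)]
    calc p x₀ * gaussKernel n α σ x x₀ * ‖x - α • x₀‖
        = p x₀ * (gaussKernel n α σ x x₀ * ‖x - α • x₀‖) := by ring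
      _ ≤ p x₀ * ((2 * π * σ ^ 2) ^ (-(n : ℝ) / 2) * σ) :=
          mul_le_mul_of_nonneg_left (gauss_mul_norm_le hσ x x₀) (hp_nonneg x₀)
      _ = (2 * π * σ ^ 2) ^ (-(n : ℝ) / 2) * σ * p x₀ := by ring

lemma toDual_eq_innerSL (v : E) : InnerProductSpace.toDual ℝ (EuclideanSpace ℝ (Fin n)) v
    = innerSL ℝ v := by
  ext w
  simp [InnerProductSpace.toDual_apply_apply]

set_option maxHeartbeats 1000000 in
set_option synthInstance.maxHeartbeats 1000000 in
lemma pt_hasGradientAt (hσ : 0 < σ) (hp_meas : Measurable p) (hp_nonneg : ∀ x₀, 0 ≤ p x₀)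
    (hp : Integrable p) (x : E) :
    HasGradientAt (smoothedMarginal n p α σ)
      (∫ x₀, (-(σ ^ 2)⁻¹ * (p x₀ * gaussKernel n α σ x x₀)) • (x - α • x₀)) x := by
  set F' : E → E → (E →L[ℝ] ℝ) := fun y x₀ =>
    (-(σ ^ 2)⁻¹ * (p x₀ * gaussKernel n α σ y x₀)) • innerSL ℝ (y - α • x₀) with hF'
  set φ : E → E := fun x₀ =>
    (-(σ ^ 2)⁻¹ * (p x₀ * gaussKernel n α σ x x₀)) • (x - α • x₀) with hφ
  have hφint : Integrable φ := by
    have heq : φ = fun x₀ =>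
        (-(σ ^ 2)⁻¹) • ((p x₀ * gaussKernel n α σ x x₀) • (x - α • x₀)) := by
      funext x₀; rw [hφ, smul_smul]
    rw [heq]
    exact (pq_vec_integrable (α := α) hσ hp_meas hp_nonneg hp x).fun_smul _
  have hfd : HasFDerivAt (smoothedMarginal n p α σ) (∫ x₀, F' x x₀) x := by
    unfold smoothedMarginal
    apply hasFDerivAt_integral_of_dominated_of_fderiv_le (s := Metric.ball x 1)
      (bound := fun x₀ => (σ ^ 2)⁻¹ * ((2 * π * σ ^ 2) ^ (-(n : ℝ) / 2) * σ) * p x₀)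
      (Metric.ball_mem_nhds x one_pos)
    · filter_upwards with y
      exact (hp_meas.mul (gauss_continuous_right y).measurable).aestronglyMeasurable
    · exact pq_integrable hσ hp_meas hp_nonneg hp x
    · apply AEStronglyMeasurable.fun_smul
      · exact ((hp_meas.mul (gauss_continuous_right x).measurable).const_mul
          (-(σ ^ 2)⁻¹)).aestronglyMeasurable
      · exact ((innerSL ℝ).continuous.comp
          (continuous_const.sub (continuous_id.const_smul α))).aestronglyMeasurable
    · filter_upwards with x₀ y _
      simp only [hF']
      have hns : ‖(-(σ ^ 2)⁻¹ * (p x₀ * gaussKernel n α σ y x₀)) • innerSL ℝ (y - α • x₀)‖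
          ≤ ‖(-(σ ^ 2)⁻¹ * (p x₀ * gaussKernel n α σ y x₀))‖ * ‖innerSL ℝ (y - α • x₀)‖ :=
        ContinuousLinearMap.opNorm_smul_le _ _
      apply le_trans hns
      rw [innerSL_apply_norm, Real.norm_eq_abs, abs_mul, abs_neg,
        abs_of_nonneg (by positivity : (0:ℝ) ≤ (σ ^ 2)⁻¹),
        abs_of_nonneg (mul_nonneg (hp_nonneg x₀) (gauss_pos hσ y x₀).le)]
      calc (σ ^ 2)⁻¹ * (p x₀ * gaussKernel n α σ y x₀) * ‖y - α • x₀‖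
          = (σ ^ 2)⁻¹ * (p x₀ * (gaussKernel n α σ y x₀ * ‖y - α • x₀‖)) := by ring
        _ ≤ (σ ^ 2)⁻¹ * (p x₀ * ((2 * π * σ ^ 2) ^ (-(n : ℝ) / 2) * σ)) := by
            apply mul_le_mul_of_nonneg_left _ (by positivity)
            exact mul_le_mul_of_nonneg_left (gauss_mul_norm_le hσ y x₀) (hp_nonneg x₀)
        _ = (σ ^ 2)⁻¹ * ((2 * π * σ ^ 2) ^ (-(n : ℝ) / 2) * σ) * p x₀ := by ring
    · exact hp.const_mul _
    · filter_upwards with x₀ y _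
      have := (gauss_hasFDerivAt (α := α) hσ y x₀).const_mul (p x₀)
      refine this.congr_fderiv ?_
      simp only [hF', smul_smul]
      congr 1
      ring
  have key : (∫ x₀, F' x x₀)
      = InnerProductSpace.toDual ℝ (EuclideanSpace ℝ (Fin n)) (∫ x₀, φ x₀) := by
    set L : EuclideanSpace ℝ (Fin n) →L[ℝ] (EuclideanSpace ℝ (Fin n) →L[ℝ] ℝ) :=
      (InnerProductSpace.toDual ℝ
        (EuclideanSpace ℝ (Fin n))).toContinuousLinearEquiv.toContinuousLinearMap with hL
    have step1 : (∫ x₀, F' x x₀) = ∫ x₀, L (φ x₀) := by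
      congr 1
      funext x₀
      ext w
      simp [hF', hφ, hL, InnerProductSpace.toDual_apply_apply, real_inner_smul_left]
    rw [step1, L.integral_comp_comm hφint]
    rfl
  rw [hasGradientAt_iff_hasFDerivAt, ← key]
  exact hfd

lemma score_smul_eq (hσ : 0 < σ) (hp_meas : Measurable p) (hp_nonneg : ∀ x₀, 0 ≤ p x₀)
    (hp : Integrable p) (hpt_pos : ∀ x, 0 < smoothedMarginal n p α σ x) (x : E) :
    smoothedMarginal n p α σ x • marginalScore n p α σ x
      = ∫ x₀, (-(σ ^ 2)⁻¹ * (p x₀ * gaussKernel n α σ x x₀)) • (x - α • x₀) := by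
  have hG := pt_hasGradientAt (α := α) hσ hp_meas hp_nonneg hp x
  set G := ∫ x₀, (-(σ ^ 2)⁻¹ * (p x₀ * gaussKernel n α σ x x₀)) • (x - α • x₀) with hGdef
  have hfd : HasFDerivAt (smoothedMarginal n p α σ)
      (InnerProductSpace.toDual ℝ (EuclideanSpace ℝ (Fin n)) G) x :=
    hG.hasFDerivAt
  have hlog : HasFDerivAt (fun y => Real.log (smoothedMarginal n p α σ y))
      ((smoothedMarginal n p α σ x)⁻¹ •
        InnerProductSpace.toDual ℝ (EuclideanSpace ℝ (Fin n)) G) x :=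
    (Real.hasDerivAt_log (ne_of_gt (hpt_pos x))).comp_hasFDerivAt x hfd
  have hlogG : HasGradientAt (fun y => Real.log (smoothedMarginal n p α σ y))
      ((smoothedMarginal n p α σ x)⁻¹ • G) x := by
    have hmap : InnerProductSpace.toDual ℝ (EuclideanSpace ℝ (Fin n))
        ((smoothedMarginal n p α σ x)⁻¹ • G)
        = (smoothedMarginal n p α σ x)⁻¹ •
          InnerProductSpace.toDual ℝ (EuclideanSpace ℝ (Fin n)) G := map_smul _ _ _
    rw [hasGradientAt_iff_hasFDerivAt, hmap]
    exact hlog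
  have hms : marginalScore n p α σ x = (smoothedMarginal n p α σ x)⁻¹ • G :=
    hlogG.gradient
  rw [hms, smul_smul, mul_inv_cancel₀ (ne_of_gt (hpt_pos x)), one_smul]

lemma score_measurable : Measurable (marginalScore n p α σ) := by
  unfold marginalScore gradient
  exact (InnerProductSpace.toDual ℝ
    (EuclideanSpace ℝ (Fin n))).symm.continuous.measurable.comp (measurable_fderiv ℝ _)

end Aux

set_option maxHeartbeats 1000000 in
set_option synthInstance.maxHeartbeats 1000000 in
/-- **Conditional score-projection identity** (Theorem A.1 with Gaussian kernel):
under the stated joint integrability condition,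
`∫∫ p(x₀) q(x|x₀) ⟨u(x), s_{p_t}(x) − ∇ₓ log q(x|x₀)⟩ dx dx₀ = 0`,
where `∇ₓ log q(x|x₀) = −(x − α·x₀)/σ²`. -/
theorem stmt_1 (n : ℕ) (p : EuclideanSpace ℝ (Fin n) → ℝ) (α σ : ℝ) (hσ : 0 < σ)
    (hp_meas : Measurable p) (hp_nonneg : ∀ x₀, 0 ≤ p x₀)
    (hp_int : ∫ x₀, p x₀ = 1)
    (hpt_pos : ∀ x, 0 < smoothedMarginal n p α σ x)
    (hpt_diff : Differentiable ℝ (smoothedMarginal n p α σ))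
    (u : EuclideanSpace ℝ (Fin n) → EuclideanSpace ℝ (Fin n)) (hu : Measurable u)
    (hint : Integrable (fun z : EuclideanSpace ℝ (Fin n) × EuclideanSpace ℝ (Fin n) =>
      p z.2 * gaussKernel n α σ z.1 z.2 *
        (‖u z.1‖ * (‖marginalScore n p α σ z.1‖ + ‖z.1 - α • z.2‖ / σ ^ 2)))) :
    ∫ z : EuclideanSpace ℝ (Fin n) × EuclideanSpace ℝ (Fin n),
      p z.2 * gaussKernel n α σ z.1 z.2 *
        ⟪u z.1, marginalScore n p α σ z.1 + (σ ^ 2)⁻¹ • (z.1 - α • z.2)⟫ = 0 := by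
  have hp : Integrable p := p_integrable hp_int
  set s := marginalScore n p α σ with hs
  -- the inner (conditional) integral vanishes for every x
  have inner_zero : ∀ x : EuclideanSpace ℝ (Fin n),
      ∫ x₀, p x₀ * gaussKernel n α σ x x₀ *
        ⟪u x, s x + (σ ^ 2)⁻¹ • (x - α • x₀)⟫ = 0 := by
    intro x
    have h1 : Integrable (fun x₀ : EuclideanSpace ℝ (Fin n) =>
        (p x₀ * gaussKernel n α σ x x₀) • s x) :=
      (pq_integrable hσ hp_meas hp_nonneg hp x).smul_const _
    have h2 : Integrable (fun x₀ : EuclideanSpace ℝ (Fin n) =>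
        (σ ^ 2)⁻¹ • ((p x₀ * gaussKernel n α σ x x₀) • (x - α • x₀))) :=
      (pq_vec_integrable hσ hp_meas hp_nonneg hp x).fun_smul _
    have heq : (fun x₀ : EuclideanSpace ℝ (Fin n) =>
        (p x₀ * gaussKernel n α σ x x₀) • (s x + (σ ^ 2)⁻¹ • (x - α • x₀)))
        = fun x₀ => (p x₀ * gaussKernel n α σ x x₀) • s x
          + (σ ^ 2)⁻¹ • ((p x₀ * gaussKernel n α σ x x₀) • (x - α • x₀)) := by
      funext x₀
      rw [smul_add, smul_comm]
    have hvec : Integrable (fun x₀ : EuclideanSpace ℝ (Fin n) =>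
        (p x₀ * gaussKernel n α σ x x₀) • (s x + (σ ^ 2)⁻¹ • (x - α • x₀))) := by
      rw [heq]; exact h1.add h2
    have hveq : (∫ x₀, (p x₀ * gaussKernel n α σ x x₀)
        • (s x + (σ ^ 2)⁻¹ • (x - α • x₀))) = 0 := by
      rw [heq, integral_add h1 h2, integral_smul_const, integral_smul]
      have hscore := score_smul_eq (α := α) hσ hp_meas hp_nonneg hp hpt_pos x
      have hneg : (∫ x₀, (-(σ ^ 2)⁻¹ * (p x₀ * gaussKernel n α σ x x₀)) • (x - α • x₀))
          = -((σ ^ 2)⁻¹ • ∫ x₀, (p x₀ * gaussKernel n α σ x x₀) • (x - α • x₀)) := by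
        rw [← integral_smul, ← integral_neg]
        congr 1
        funext x₀
        rw [neg_mul, neg_smul, smul_smul]
      have hpt : (∫ x₀, p x₀ * gaussKernel n α σ x x₀) • s x
          = smoothedMarginal n p α σ x • s x := rfl
      rw [hpt, hscore, hneg]
      abel
    calc (∫ x₀, p x₀ * gaussKernel n α σ x x₀ * ⟪u x, s x + (σ ^ 2)⁻¹ • (x - α • x₀)⟫)
        = ∫ x₀, ⟪u x, (p x₀ * gaussKernel n α σ x x₀)
            • (s x + (σ ^ 2)⁻¹ • (x - α • x₀))⟫ := by
          congr 1
          funext x₀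
          rw [real_inner_smul_right]
      _ = ⟪u x, ∫ x₀, (p x₀ * gaussKernel n α σ x x₀)
            • (s x + (σ ^ 2)⁻¹ • (x - α • x₀))⟫ := integral_inner hvec _
      _ = 0 := by rw [hveq, inner_zero_right]
  -- measurability of the full integrand
  have hw_meas : Measurable (fun z : EuclideanSpace ℝ (Fin n) × EuclideanSpace ℝ (Fin n) =>
      s z.1 + (σ ^ 2)⁻¹ • (z.1 - α • z.2)) := by
    apply Measurable.add
    · exact score_measurable.comp measurable_fst
    · exact ((measurable_fst.sub (measurable_snd.const_smul α)).fun_const_smul _)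
  have hmeasf : AEStronglyMeasurable (fun z : EuclideanSpace ℝ (Fin n) × EuclideanSpace ℝ (Fin n) =>
      p z.2 * gaussKernel n α σ z.1 z.2 *
        ⟪u z.1, s z.1 + (σ ^ 2)⁻¹ • (z.1 - α • z.2)⟫) := by
    apply Measurable.aestronglyMeasurable
    exact ((hp_meas.comp measurable_snd).mul gauss_continuous.measurable).mul
      ((hu.comp measurable_fst).inner hw_meas)
  -- integrability of the full integrand
  have hintf : Integrable (fun z : EuclideanSpace ℝ (Fin n) × EuclideanSpace ℝ (Fin n) =>
      p z.2 * gaussKernel n α σ z.1 z.2 *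
        ⟪u z.1, s z.1 + (σ ^ 2)⁻¹ • (z.1 - α • z.2)⟫) := by
    apply hint.mono' hmeasf
    filter_upwards with z
    have hq := (gauss_pos (α := α) hσ z.1 z.2).le
    rw [Real.norm_eq_abs, abs_mul, abs_of_nonneg (mul_nonneg (hp_nonneg z.2) hq)]
    apply mul_le_mul_of_nonneg_left _ (mul_nonneg (hp_nonneg z.2) hq)
    calc |⟪u z.1, s z.1 + (σ ^ 2)⁻¹ • (z.1 - α • z.2)⟫|
        ≤ ‖u z.1‖ * ‖s z.1 + (σ ^ 2)⁻¹ • (z.1 - α • z.2)‖ := abs_real_inner_le_norm _ _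
      _ ≤ ‖u z.1‖ * (‖s z.1‖ + ‖z.1 - α • z.2‖ / σ ^ 2) := by
          apply mul_le_mul_of_nonneg_left _ (norm_nonneg _)
          apply le_trans (norm_add_le _ _)
          rw [norm_smul, Real.norm_eq_abs, abs_of_nonneg (by positivity : (0:ℝ) ≤ (σ ^ 2)⁻¹),
            div_eq_inv_mul]
  rw [Measure.volume_eq_prod] at hintf ⊢
  rw [integral_prod _ hintf]
  simp only [inner_zero]
  simp
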